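/- Let n ≥ 2, let H be a group with presentation ⟨ S ∣ 𝓡 ⟩ (i.e., H is the quotient of the free group on S by the normal closure of the set of relators 𝓡), let h ∈ H be non-trivial, and let D be a word in the free group on S representing h. Let ρ : Bₙ → Aut(G) be the Artin type representation associated to (H,h), where G = H₁ ∗ ⋯ ∗ Hₙ. Then the semidirect product G ⋊_ρ Bₙ is isomorphic to the group presented by generators S ∪ {σ₁, …, σ_{n−1}} and relations: r = 1 for each r ∈ 𝓡; σᵢσᵢ₊₁σᵢ = σᵢ₊₁σᵢσᵢ₊₁ for i = 1, …, n−2; σᵢσⱼ = σⱼσᵢ for |i−j| ≥ 2; σᵢ x = x σᵢ for all x ∈ S and i = 2, …, n−1; and x σ₁ D σ₁ = σ₁ D σ₁ D⁻¹ x D for all x ∈ S. -/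

import Mathlib

def braidRels (m : ℕ) : Set (FreeGroup (Fin m)) :=
  { r | (∃ i j : Fin m, (i : ℕ) + 1 = (j : ℕ) ∧
          r = FreeGroup.of i * FreeGroup.of j * FreeGroup.of i *
              (FreeGroup.of j * FreeGroup.of i * FreeGroup.of j)⁻¹) ∨
        (∃ i j : Fin m, (i : ℕ) + 2 ≤ (j : ℕ) ∧
          r = FreeGroup.of i * FreeGroup.of j * (FreeGroup.of j * FreeGroup.of i)⁻¹) }

abbrev BraidGroup (m : ℕ) : Type := PresentedGroup (braidRels m)

def braidGen {m : ℕ} (i : Fin m) : BraidGroup m := PresentedGroup.of i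

def idx0 {n : ℕ} (k : Fin (n - 1)) : Fin n := ⟨k.1, by have := k.2; omega⟩
def idx1 {n : ℕ} (k : Fin (n - 1)) : Fin n := ⟨k.1 + 1, by have := k.2; omega⟩

def IsArtinRep {n : ℕ} {H : Type} [Group H] (h : H)
    (ρ : BraidGroup (n - 1) →* MulAut (Monoid.CoprodI (fun _ : Fin n => H))) : Prop :=
  ∀ k : Fin (n - 1),
    (∀ y : H, ρ (braidGen k) (Monoid.CoprodI.of (i := idx0 k) y) =
        (Monoid.CoprodI.of (i := idx0 k) h)⁻¹ * Monoid.CoprodI.of (i := idx1 k) y *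
          Monoid.CoprodI.of (i := idx0 k) h) ∧
    (∀ y : H, ρ (braidGen k) (Monoid.CoprodI.of (i := idx1 k) y) =
        Monoid.CoprodI.of (i := idx0 k) h * Monoid.CoprodI.of (i := idx0 k) y *
          (Monoid.CoprodI.of (i := idx0 k) h)⁻¹) ∧
    (∀ j : Fin n, j ≠ idx0 k → j ≠ idx1 k →
      ∀ y : H, ρ (braidGen k) (Monoid.CoprodI.of (i := j) y) = Monoid.CoprodI.of (i := j) y)

def semidirectRels (n : ℕ) (S : Type) (R : Set (FreeGroup S)) (D : FreeGroup S) :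
    Set (FreeGroup (S ⊕ Fin (n - 1))) :=
  (FreeGroup.map Sum.inl) '' R ∪
  (FreeGroup.map Sum.inr) '' braidRels (n - 1) ∪
  { w | ∃ (x : S) (i : Fin (n - 1)), 1 ≤ (i : ℕ) ∧
      w = FreeGroup.of (Sum.inr i) * FreeGroup.of (Sum.inl x) *
          (FreeGroup.of (Sum.inl x) * FreeGroup.of (Sum.inr i))⁻¹ } ∪
  { w | ∃ (x : S) (i : Fin (n - 1)), (i : ℕ) = 0 ∧
      w = FreeGroup.of (Sum.inl x) * FreeGroup.of (Sum.inr i) * (FreeGroup.map Sum.inl) D *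
            FreeGroup.of (Sum.inr i) *
          (FreeGroup.of (Sum.inr i) * (FreeGroup.map Sum.inl) D * FreeGroup.of (Sum.inr i) *
            ((FreeGroup.map Sum.inl) D)⁻¹ * FreeGroup.of (Sum.inl x) *
            (FreeGroup.map Sum.inl) D)⁻¹ }

namespace SPP

variable {n : ℕ} {S : Type} {R : Set (FreeGroup S)} {D : FreeGroup S}

local notation "Pg" => PresentedGroup (semidirectRels n S R D)

lemma relOne {w : FreeGroup (S ⊕ Fin (n - 1))} (hw : w ∈ semidirectRels n S R D) :
    PresentedGroup.mk (semidirectRels n S R D) w = 1 :=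
  (QuotientGroup.eq_one_iff w).mpr (Subgroup.subset_normalClosure hw)

lemma mk_R_eq_one {r : FreeGroup S} (hr : r ∈ R) : PresentedGroup.mk R r = 1 :=
  (QuotientGroup.eq_one_iff r).mpr (Subgroup.subset_normalClosure hr)

lemma mk_braid_eq_one {m : ℕ} {r : FreeGroup (Fin m)} (hr : r ∈ braidRels m) :
    PresentedGroup.mk (braidRels m) r = 1 :=
  (QuotientGroup.eq_one_iff r).mpr (Subgroup.subset_normalClosure hr)

lemma mk_map_inl (w : FreeGroup S) :
    PresentedGroup.mk (semidirectRels n S R D) (FreeGroup.map Sum.inl w)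
      = FreeGroup.lift (fun x => (PresentedGroup.of (Sum.inl x) : Pg)) w := by
  have : (PresentedGroup.mk (semidirectRels n S R D)).comp (FreeGroup.map Sum.inl)
      = FreeGroup.lift (fun x => (PresentedGroup.of (Sum.inl x) : Pg)) := by
    apply FreeGroup.ext_hom; intro a; simp [PresentedGroup.of]
  exact DFunLike.congr_fun this w

/-- The copy of `H` on strand 0. -/
def e0 : PresentedGroup R →* Pg :=
  PresentedGroup.toGroup (f := fun x => (PresentedGroup.of (Sum.inl x) : Pg)) (by
    intro r hr
    rw [← mk_map_inl]
    exact relOne (Or.inl (Or.inl (Or.inl ⟨r, hr, rfl⟩))))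

@[simp] lemma e0_of (x : S) :
    (e0 (PresentedGroup.of x) : Pg) = PresentedGroup.of (Sum.inl x) := by
  simp [e0]

lemma e0_mk (w : FreeGroup S) :
    (e0 (PresentedGroup.mk R w) : Pg)
      = PresentedGroup.mk (semidirectRels n S R D) (FreeGroup.map Sum.inl w) := by
  rw [mk_map_inl]
  have : (e0.comp (PresentedGroup.mk R) : FreeGroup S →* Pg)
      = FreeGroup.lift (fun x => (PresentedGroup.of (Sum.inl x) : Pg)) := by
    apply FreeGroup.ext_hom; intro a
    exact e0_of a
  exact DFunLike.congr_fun this w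

end SPP

namespace SPP

variable {n : ℕ} {S : Type} {R : Set (FreeGroup S)} {D : FreeGroup S}

local notation "Pg" => PresentedGroup (semidirectRels n S R D)

lemma mk_map_inr (w : FreeGroup (Fin (n-1))) :
    PresentedGroup.mk (semidirectRels n S R D) (FreeGroup.map Sum.inr w)
      = FreeGroup.lift (fun i => (PresentedGroup.of (Sum.inr i) : Pg)) w := by
  have : (PresentedGroup.mk (semidirectRels n S R D)).comp (FreeGroup.map Sum.inr)
      = FreeGroup.lift (fun i => (PresentedGroup.of (Sum.inr i) : Pg)) := by
    apply FreeGroup.ext_hom; intro a; simp [PresentedGroup.of]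
  exact DFunLike.congr_fun this w

lemma brd1 (i j : Fin (n-1)) (hij : (i : ℕ) + 1 = (j : ℕ)) :
    (PresentedGroup.of (Sum.inr i) : Pg) * .of (Sum.inr j) * .of (Sum.inr i)
      = .of (Sum.inr j) * .of (Sum.inr i) * .of (Sum.inr j) := by
  have hw : (FreeGroup.map Sum.inr) (FreeGroup.of i * FreeGroup.of j * FreeGroup.of i *
      (FreeGroup.of j * FreeGroup.of i * FreeGroup.of j)⁻¹) ∈ semidirectRels n S R D :=
    Or.inl (Or.inl (Or.inr ⟨_, Or.inl ⟨i, j, hij, rfl⟩, rfl⟩))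
  have h1 := relOne hw
  rw [mk_map_inr] at h1
  simp only [map_mul, map_inv, FreeGroup.lift_apply_of] at h1
  exact mul_inv_eq_one.mp h1

lemma brd2 (i j : Fin (n-1)) (hij : (i : ℕ) + 2 ≤ (j : ℕ)) :
    (PresentedGroup.of (Sum.inr i) : Pg) * .of (Sum.inr j)
      = .of (Sum.inr j) * .of (Sum.inr i) := by
  have hw : (FreeGroup.map Sum.inr) (FreeGroup.of i * FreeGroup.of j *
      (FreeGroup.of j * FreeGroup.of i)⁻¹) ∈ semidirectRels n S R D :=
    Or.inl (Or.inl (Or.inr ⟨_, Or.inr ⟨i, j, hij, rfl⟩, rfl⟩))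
  have h1 := relOne hw
  rw [mk_map_inr] at h1
  simp only [map_mul, map_inv, FreeGroup.lift_apply_of] at h1
  exact mul_inv_eq_one.mp h1

lemma brd2' (i j : Fin (n-1)) (hij : (i : ℕ) + 2 ≤ (j : ℕ) ∨ (j : ℕ) + 2 ≤ (i : ℕ)) :
    Commute (PresentedGroup.of (Sum.inr i) : Pg) (.of (Sum.inr j)) := by
  rcases hij with hij | hij
  · exact brd2 i j hij
  · exact (brd2 j i hij).symm

/-- Extend a commutation statement from generators of `H` to all of `H`. -/
lemma commute_all (a : Pg) (F : PresentedGroup R →* Pg)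
    (hx : ∀ x : S, Commute (F (.of x)) a) : ∀ y, Commute (F y) a := by
  intro y
  have key : (MulAut.conj a).toMonoidHom.comp F = F := by
    apply PresentedGroup.ext; intro x
    simp only [MonoidHom.comp_apply, MulAut.conj_apply, MulEquiv.coe_toMonoidHom]
    rw [← (hx x).eq, mul_inv_cancel_right]
  have h2 := DFunLike.congr_fun key y
  simp only [MonoidHom.comp_apply, MulAut.conj_apply, MulEquiv.coe_toMonoidHom] at h2
  have h3 : a * F y = F y * a := by
    conv_rhs => rw [← h2]
    group
  exact h3.symm

lemma rel3 (i : Fin (n-1)) (hi : 1 ≤ (i : ℕ)) :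
    ∀ y, Commute ((e0 y : Pg)) (.of (Sum.inr i)) := by
  apply commute_all
  intro x
  have hw : (FreeGroup.of (Sum.inr i) * FreeGroup.of (Sum.inl x) *
      (FreeGroup.of (Sum.inl x) * FreeGroup.of (Sum.inr i))⁻¹) ∈ semidirectRels n S R D :=
    Or.inl (Or.inr ⟨x, i, hi, rfl⟩)
  have h1 := relOne hw
  simp only [map_mul, map_inv] at h1
  have h2 := mul_inv_eq_one.mp h1
  rw [e0_of]
  exact (h2.symm : _)

lemma rel4 (i : Fin (n-1)) (hi : (i : ℕ) = 0) (h : PresentedGroup R)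
    (hD : PresentedGroup.mk R D = h) :
    ∀ y, Commute ((e0 y : Pg))
      (.of (Sum.inr i) * e0 h * .of (Sum.inr i) * (e0 h : Pg)⁻¹) := by
  apply commute_all
  intro x
  have hw : (FreeGroup.of (Sum.inl x) * FreeGroup.of (Sum.inr i) * (FreeGroup.map Sum.inl) D *
            FreeGroup.of (Sum.inr i) *
          (FreeGroup.of (Sum.inr i) * (FreeGroup.map Sum.inl) D * FreeGroup.of (Sum.inr i) *
            ((FreeGroup.map Sum.inl) D)⁻¹ * FreeGroup.of (Sum.inl x) *
            (FreeGroup.map Sum.inl) D)⁻¹) ∈ semidirectRels n S R D :=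
    Or.inr ⟨x, i, hi, rfl⟩
  have h1 := relOne hw
  simp only [map_mul, map_inv] at h1
  have h2 := mul_inv_eq_one.mp h1
  have hof : ∀ v : S ⊕ Fin (n-1), PresentedGroup.mk (semidirectRels n S R D) (FreeGroup.of v)
      = PresentedGroup.of v := fun _ => rfl
  rw [← e0_mk, hD] at h2
  simp only [hof] at h2
  rw [e0_of]
  set X := (PresentedGroup.of (Sum.inl x) : Pg)
  set s := (PresentedGroup.of (Sum.inr i) : Pg)
  set d := (e0 h : Pg)
  calc X * (s * d * s * d⁻¹) = (X * s * d * s) * d⁻¹ := by group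
    _ = (s * d * s * d⁻¹ * X * d) * d⁻¹ := by rw [h2]
    _ = (s * d * s * d⁻¹) * X := by group
end SPP

namespace SPP

lemma commute_conj_iff {G : Type*} [Group G] (a x m : G) :
    Commute x (a * m * a⁻¹) ↔ Commute (a⁻¹ * x * a) m := by
  constructor
  · intro hh
    calc (a⁻¹ * x * a) * m = a⁻¹ * (x * (a * m * a⁻¹)) * a := by group
      _ = a⁻¹ * ((a * m * a⁻¹) * x) * a := by rw [hh.eq]
      _ = m * (a⁻¹ * x * a) := by group
  · intro hh
    calc x * (a * m * a⁻¹) = a * ((a⁻¹ * x * a) * m) * a⁻¹ := by group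
      _ = a * (m * (a⁻¹ * x * a)) * a⁻¹ := by rw [hh.eq]
      _ = (a * m * a⁻¹) * x := by group

/-- `sN j` : the `j`-th braid generator in the presented group (or `1` if out of range). -/
def sN (n : ℕ) (S : Type) (R : Set (FreeGroup S)) (D : FreeGroup S) (j : ℕ) :
    PresentedGroup (semidirectRels n S R D) :=
  if hj : j < n - 1 then PresentedGroup.of (Sum.inr ⟨j, hj⟩) else 1

lemma sN_eq {n : ℕ} {S : Type} {R : Set (FreeGroup S)} {D : FreeGroup S} (j : ℕ)
    (hj : j < n - 1) :
    sN n S R D j = PresentedGroup.of (Sum.inr ⟨j, hj⟩) := dif_pos hj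

/-- The `j`-th conjugated copy of `H` inside the presented group. -/
def ee (n : ℕ) (S : Type) (R : Set (FreeGroup S)) (D : FreeGroup S) (h : PresentedGroup R) :
    ℕ → (PresentedGroup R →* PresentedGroup (semidirectRels n S R D))
  | 0 => e0
  | (j+1) => (MulAut.conj (ee n S R D h j h * sN n S R D j)).toMonoidHom.comp (ee n S R D h j)

lemma ee_zero {n : ℕ} {S : Type} {R : Set (FreeGroup S)} {D : FreeGroup S}
    (h : PresentedGroup R) : ee n S R D h 0 = e0 := rfl

lemma ee_succ {n : ℕ} {S : Type} {R : Set (FreeGroup S)} {D : FreeGroup S}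
    (h : PresentedGroup R) (j : ℕ) (y : PresentedGroup R) :
    ee n S R D h (j+1) y
      = (ee n S R D h j h * sN n S R D j) * ee n S R D h j y *
          (ee n S R D h j h * sN n S R D j)⁻¹ := by
  show (MulAut.conj _).toMonoidHom.comp _ y = _
  simp [MulAut.conj_apply, mul_assoc]

end SPP

namespace SPP

variable {n : ℕ} {S : Type} {R : Set (FreeGroup S)} {D : FreeGroup S}

/-- The key commutation lemmas, proven simultaneously by strong induction on the strand. -/
lemma AB (h : PresentedGroup R) (hD : PresentedGroup.mk R D = h) (j : ℕ) :
    ((j ≤ n - 1) → ∀ i : Fin (n-1), (i : ℕ) ≠ j → (i : ℕ) + 1 ≠ j →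
      ∀ y, Commute (PresentedGroup.of (Sum.inr i)) (ee n S R D h j y)) ∧
    ((j < n - 1) → ∀ y, Commute (ee n S R D h j y)
      (sN n S R D j * ee n S R D h j h * sN n S R D j * (ee n S R D h j h)⁻¹)) := by
  induction j using Nat.strong_induction_on with
  | _ j IH =>
    constructor
    · -- the B statement
      intro hj i hi1 hi2 y
      match j, hj, hi1, hi2 with
      | 0, hj, hi1, hi2 =>
        exact (rel3 i (by omega) y).symm
      | (j'+1), hj, hi1, hi2 =>
        have hj' : j' < n - 1 := by omega
        by_cases hc : (i : ℕ) + 1 = j'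
        · -- hard case : i + 1 = j', level j'+1 = i+2
          obtain ⟨iv, hiv⟩ := i
          simp only at hc hi1 hi2 ⊢
          subst hc
          -- notation
          set i : Fin (n-1) := ⟨iv, hiv⟩ with hidef
          set σ := (PresentedGroup.of (Sum.inr i) : PresentedGroup (semidirectRels n S R D))
            with hσ
          set t := sN n S R D (iv+1) with ht
          set d := ee n S R D h iv h with hd
          set E := ee n S R D h iv with hE
          set a := ee n S R D h (iv+1) h with hadef
          -- facts
          have hAi : ∀ z, Commute (E z) (sN n S R D iv * d * sN n S R D iv * d⁻¹) :=
            (IH iv (by omega)).2 (by omega)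
          have hss : sN n S R D iv = σ := by rw [sN_eq iv (by omega)]
          have hBi : ∀ z, Commute t (E z) := by
            intro z
            rw [ht, sN_eq (iv+1) hj']
            exact (IH iv (by omega)).1 (by omega) ⟨iv+1, hj'⟩
              (by show iv + 1 ≠ iv; omega) (by show iv + 1 + 1 ≠ iv; omega) z
          have hF1 : Commute t d := hBi h
          have hbr : σ * t * σ = t * σ * t := by
            rw [ht, sN_eq (iv+1) hj', hσ]
            exact brd1 i ⟨iv+1, hj'⟩ rfl
          have hb1 : t⁻¹ * σ * t = σ * t * σ⁻¹ := by
            calc t⁻¹ * σ * t = t⁻¹ * (σ * t * σ) * σ⁻¹ := by group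
              _ = t⁻¹ * (t * σ * t) * σ⁻¹ := by rw [hbr]
              _ = σ * t * σ⁻¹ := by group
          have ha : a = d * σ * d * σ⁻¹ * d⁻¹ := by
            rw [hadef, ee_succ, hss]; group; rfl
          have heq2 : σ * d * σ * d = d * σ * d * σ := by
            have hcq : Commute d (σ * d * σ * d⁻¹) := by
              have := hAi h; rw [hss] at this; exact this
            calc σ * d * σ * d = ((σ * d * σ * d⁻¹) * d) * d := by group
              _ = (d * (σ * d * σ * d⁻¹)) * d := by rw [← hcq.eq]
              _ = d * σ * d * σ := by group
          -- goal
          have hgoal : ee n S R D h (iv+1+1) y = (a * t) * ee n S R D h (iv+1) y * (a * t)⁻¹ := by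
            rw [ee_succ h (iv+1)]
          rw [hgoal, commute_conj_iff]
          have hM : ee n S R D h (iv+1) y = (d * σ) * E y * (d * σ)⁻¹ := by
            rw [ee_succ, hss]
          have hN : (a * t)⁻¹ * σ * (a * t) = d * (σ * t * σ⁻¹) * d⁻¹ := by
            have hinner : a⁻¹ * σ * a = d * σ * d⁻¹ := by
              calc a⁻¹ * σ * a
                  = (d * σ * d⁻¹ * σ⁻¹ * d⁻¹) * (σ * d * σ * d) * (σ⁻¹ * d⁻¹) := by
                    rw [ha]; group
                _ = (d * σ * d⁻¹ * σ⁻¹ * d⁻¹) * (d * σ * d * σ) * (σ⁻¹ * d⁻¹) := by rw [heq2]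
                _ = d * σ * d⁻¹ := by group
            calc (a * t)⁻¹ * σ * (a * t) = t⁻¹ * (a⁻¹ * σ * a) * t := by group
              _ = t⁻¹ * (d * σ * d⁻¹) * t := by rw [hinner]
              _ = (t⁻¹ * d) * σ * (d⁻¹ * t) := by group
              _ = (d * t⁻¹) * σ * (t * d⁻¹) := by rw [hF1.inv_left.eq, (hF1.inv_right.symm).eq]
              _ = d * (t⁻¹ * σ * t) * d⁻¹ := by group
              _ = d * (σ * t * σ⁻¹) * d⁻¹ := by rw [hb1]
          rw [hN, hM, commute_conj_iff]
          have : (d * σ)⁻¹ * (d * (σ * t * σ⁻¹) * d⁻¹) * (d * σ) = t := by group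
          rw [this]
          exact hBi y
        · -- easy (far) case
          have c3 : ∀ z, Commute (PresentedGroup.of (Sum.inr i)) (ee n S R D h j' z) :=
            (IH j' (by omega)).1 (by omega) i (by omega) hc
          have c2 : Commute (PresentedGroup.of (Sum.inr i)) (sN n S R D j') := by
            rw [sN_eq j' hj']
            exact brd2' i ⟨j', hj'⟩ (by show (i:ℕ)+2 ≤ j' ∨ j'+2 ≤ (i:ℕ); omega)
          rw [ee_succ]
          exact ((((c3 h).mul_right c2)).mul_right (c3 y)).mul_right
            (((c3 h).mul_right c2)).inv_right
    · -- the A statement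
      intro hj y
      match j, hj with
      | 0, hj =>
        rw [sN_eq 0 hj]
        exact rel4 ⟨0, hj⟩ rfl h hD y
      | (j'+1), hj =>
        have hj' : j' < n - 1 := by omega
        set s := sN n S R D j' with hs
        set t := sN n S R D (j'+1) with ht
        set d := ee n S R D h j' h with hd
        set E := ee n S R D h j' with hE
        set a := ee n S R D h (j'+1) h with hadef
        have hA : ∀ z, Commute (E z) (s * d * s * d⁻¹) := (IH j' (by omega)).2 hj'
        have hB : ∀ z, Commute t (E z) := by
          intro z
          rw [ht, sN_eq (j'+1) hj]
          exact (IH j' (by omega)).1 (by omega) ⟨j'+1, hj⟩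
            (by show j' + 1 ≠ j'; omega) (by show j' + 1 + 1 ≠ j'; omega) z
        have hF1 : Commute t d := hB h
        have hbr : s * t * s = t * s * t := by
          rw [hs, ht, sN_eq j' hj', sN_eq (j'+1) hj]
          exact brd1 ⟨j', hj'⟩ ⟨j'+1, hj⟩ rfl
        have hb2 : s⁻¹ * t * s = t * s * t⁻¹ := by
          calc s⁻¹ * t * s = s⁻¹ * (t * s * t) * t⁻¹ := by group
            _ = s⁻¹ * (s * t * s) * t⁻¹ := by rw [← hbr]
            _ = t * s * t⁻¹ := by group
        have ha : a = d * s * d * s⁻¹ * d⁻¹ := by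
          rw [hadef, ee_succ, ← hs]; group; rfl
        have hFy : ee n S R D h (j'+1) y = (d * s) * E y * (d * s)⁻¹ := by
          rw [ee_succ, ← hs]
        have key : t * a * t * a⁻¹ = (d * s) * (t * (s * d * s * d⁻¹) * t⁻¹) * (d * s)⁻¹ := by
          calc t * a * t * a⁻¹
              = (t * d) * (s * d * s⁻¹) * ((d⁻¹ * t) * d) * (s * d⁻¹ * s⁻¹ * d⁻¹) := by
                rw [ha]; group
            _ = (d * t) * (s * d * s⁻¹) * ((t * d⁻¹) * d) * (s * d⁻¹ * s⁻¹ * d⁻¹) := by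
                rw [hF1.eq, (hF1.inv_right.symm).eq]
            _ = (d * (t * s)) * d * (s⁻¹ * t * s) * (d⁻¹ * (s⁻¹ * d⁻¹)) := by group
            _ = (d * (t * s)) * d * (t * s * t⁻¹) * (d⁻¹ * (s⁻¹ * d⁻¹)) := by rw [hb2]
            _ = (d * (t * s)) * (d * t) * (s * (t⁻¹ * (d⁻¹ * (s⁻¹ * d⁻¹)))) := by group
            _ = (d * (t * s)) * (t * d) * (s * (t⁻¹ * (d⁻¹ * (s⁻¹ * d⁻¹)))) := by
                rw [← hF1.eq]
            _ = d * (t * s * t) * (d * (s * (t⁻¹ * (d⁻¹ * (s⁻¹ * d⁻¹))))) := by group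
            _ = d * (s * t * s) * (d * (s * (t⁻¹ * (d⁻¹ * (s⁻¹ * d⁻¹))))) := by rw [← hbr]
            _ = (d * (s * (t * (s * (d * s))))) * ((t⁻¹ * d⁻¹) * (s⁻¹ * d⁻¹)) := by group
            _ = (d * (s * (t * (s * (d * s))))) * ((d⁻¹ * t⁻¹) * (s⁻¹ * d⁻¹)) := by
                rw [(hF1.inv_left.inv_right).eq]
            _ = (d * s) * (t * (s * d * s * d⁻¹) * t⁻¹) * (d * s)⁻¹ := by group
        rw [hFy, key]
        have base : Commute (E y) (t * (s * d * s * d⁻¹) * t⁻¹) :=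
          (((hB y).symm.mul_right (hA y))).mul_right (hB y).symm.inv_right
        have := base.map (MulAut.conj (d * s)).toMonoidHom
        simpa [MulAut.conj_apply, mul_assoc] using this

end SPP

namespace SPP

variable {n : ℕ} {S : Type} {R : Set (FreeGroup S)} {D : FreeGroup S}

/-- The braid-group part of the inverse homomorphism. -/
def bB (n : ℕ) (S : Type) (R : Set (FreeGroup S)) (D : FreeGroup S) :
    BraidGroup (n-1) →* PresentedGroup (semidirectRels n S R D) :=
  PresentedGroup.toGroup (f := fun i => PresentedGroup.of (Sum.inr i)) (by
    intro r hr
    rw [← mk_map_inr]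
    exact relOne (Or.inl (Or.inl (Or.inr ⟨r, hr, rfl⟩))))

@[simp] lemma bB_of (i : Fin (n-1)) :
    bB n S R D (braidGen i) = PresentedGroup.of (Sum.inr i) := by
  simp [bB, braidGen, PresentedGroup.toGroup.of]

/-- The free-product part of the inverse homomorphism. -/
def gG (n : ℕ) (S : Type) (R : Set (FreeGroup S)) (D : FreeGroup S) (h : PresentedGroup R) :
    Monoid.CoprodI (fun _ : Fin n => PresentedGroup R) →*
      PresentedGroup (semidirectRels n S R D) :=
  Monoid.CoprodI.lift (fun j => ee n S R D h j.1)

@[simp] lemma gG_of (h : PresentedGroup R) (j : Fin n) (y : PresentedGroup R) :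
    gG n S R D h (Monoid.CoprodI.of (i := j) y) = ee n S R D h j.1 y := by
  simp [gG, Monoid.CoprodI.lift_of]

lemma compat_gen (h : PresentedGroup R) (hD : PresentedGroup.mk R D = h)
    (ρ : BraidGroup (n - 1) →* MulAut (Monoid.CoprodI (fun _ : Fin n => PresentedGroup R)))
    (hρ : IsArtinRep h ρ) (k : Fin (n-1)) (x : Monoid.CoprodI (fun _ : Fin n => PresentedGroup R)) :
    gG n S R D h (ρ (braidGen k) x)
      = PresentedGroup.of (Sum.inr k) * gG n S R D h x * (PresentedGroup.of (Sum.inr k))⁻¹ := by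
  have key : (gG n S R D h).comp (ρ (braidGen k)).toMonoidHom
      = (MulAut.conj (PresentedGroup.of (Sum.inr k))).toMonoidHom.comp (gG n S R D h) := by
    apply Monoid.CoprodI.ext_hom
    intro j
    refine MonoidHom.ext fun y => ?_
    simp only [MonoidHom.comp_apply, MulEquiv.coe_toMonoidHom, MulAut.conj_apply]
    by_cases h0 : j = idx0 k
    · subst h0
      rw [(hρ k).1 y]
      simp only [map_mul, map_inv, gG_of]
      have hv1 : ((idx1 k : Fin n) : ℕ) = (k : ℕ) + 1 := rfl
      have hv0 : ((idx0 k : Fin n) : ℕ) = (k : ℕ) := rfl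
      rw [hv1, hv0, ee_succ, sN_eq (k : ℕ) k.isLt, Fin.eta]
      group
    · by_cases h1 : j = idx1 k
      · subst h1
        rw [(hρ k).2.1 y]
        simp only [map_mul, map_inv, gG_of]
        have hv1 : ((idx1 k : Fin n) : ℕ) = (k : ℕ) + 1 := rfl
        have hv0 : ((idx0 k : Fin n) : ℕ) = (k : ℕ) := rfl
        rw [hv1, hv0, ee_succ, sN_eq (k : ℕ) k.isLt, Fin.eta]
        set σ := (PresentedGroup.of (Sum.inr k) : PresentedGroup (semidirectRels n S R D))
        set d := ee n S R D h (k : ℕ) h with hd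
        set E := ee n S R D h (k : ℕ) with hE
        have hA := (AB h hD (k : ℕ)).2 k.isLt
        rw [sN_eq (k : ℕ) k.isLt, Fin.eta] at hA
        have hEc : E (h * y * h⁻¹) = d * E y * d⁻¹ := by
          rw [map_mul, map_mul, map_inv]
        have hX : Commute (d * E y * d⁻¹) (σ * d * σ * d⁻¹) := by
          rw [← hEc]; exact hA (h * y * h⁻¹)
        symm
        calc σ * ((d * σ) * E y * (d * σ)⁻¹) * σ⁻¹
            = (σ * d * σ * d⁻¹) * (d * E y * d⁻¹) * (d * σ⁻¹ * d⁻¹ * σ⁻¹) := by group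
          _ = (d * E y * d⁻¹) * (σ * d * σ * d⁻¹) * (d * σ⁻¹ * d⁻¹ * σ⁻¹) := by
              rw [hX.symm.eq]
          _ = d * E y * d⁻¹ := by group
      · rw [(hρ k).2.2 j h0 h1 y]
        simp only [gG_of]
        have hk0 : (k : ℕ) ≠ (j : ℕ) := by
          intro heq; exact h0 (Fin.ext heq.symm)
        have hk1 : (k : ℕ) + 1 ≠ (j : ℕ) := by
          intro heq; exact h1 (Fin.ext heq.symm)
        have hB := (AB h hD (j : ℕ)).1 (by omega) k hk0 hk1 y
        symm
        rw [(hB).eq]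
        group
  exact DFunLike.congr_fun key x

end SPP

namespace SPP

variable {n : ℕ} {S : Type} {R : Set (FreeGroup S)} {D : FreeGroup S}

lemma compat_inv (h : PresentedGroup R)
    (ρ : BraidGroup (n - 1) →* MulAut (Monoid.CoprodI (fun _ : Fin n => PresentedGroup R)))
    (β : BraidGroup (n-1))
    (hb : ∀ x, gG n S R D h (ρ β x) = bB n S R D β * gG n S R D h x * (bB n S R D β)⁻¹) :
    ∀ x, gG n S R D h (ρ β⁻¹ x)
      = bB n S R D β⁻¹ * gG n S R D h x * (bB n S R D β⁻¹)⁻¹ := by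
  intro x
  have hfix : ρ β ((ρ β)⁻¹ x) = x := by
    rw [← MulAut.mul_apply, mul_inv_cancel, MulAut.one_apply]
  have h2 := hb ((ρ β)⁻¹ x)
  rw [hfix] at h2
  rw [map_inv, map_inv, h2]
  group

lemma compat_mul (h : PresentedGroup R)
    (ρ : BraidGroup (n - 1) →* MulAut (Monoid.CoprodI (fun _ : Fin n => PresentedGroup R)))
    (β γ : BraidGroup (n-1))
    (hb : ∀ x, gG n S R D h (ρ β x) = bB n S R D β * gG n S R D h x * (bB n S R D β)⁻¹)
    (hc : ∀ x, gG n S R D h (ρ γ x) = bB n S R D γ * gG n S R D h x * (bB n S R D γ)⁻¹) :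
    ∀ x, gG n S R D h (ρ (β * γ) x)
      = bB n S R D (β * γ) * gG n S R D h x * (bB n S R D (β * γ))⁻¹ := by
  intro x
  rw [map_mul, map_mul, MulAut.mul_apply, hb, hc]
  group

lemma compat (h : PresentedGroup R) (hD : PresentedGroup.mk R D = h)
    (ρ : BraidGroup (n - 1) →* MulAut (Monoid.CoprodI (fun _ : Fin n => PresentedGroup R)))
    (hρ : IsArtinRep h ρ) (β : BraidGroup (n-1)) :
    ∀ x, gG n S R D h (ρ β x)
      = bB n S R D β * gG n S R D h x * (bB n S R D β)⁻¹ := by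
  have hgenc : ∀ i : Fin (n-1), ∀ x, gG n S R D h (ρ (braidGen i) x)
      = bB n S R D (braidGen i) * gG n S R D h x * (bB n S R D (braidGen i))⁻¹ := by
    intro i x
    rw [bB_of]
    exact compat_gen h hD ρ hρ i x
  induction β using PresentedGroup.induction_on with
  | _ z =>
  induction z using FreeGroup.induction_on with
  | C1 =>
    intro x
    have h1 : (PresentedGroup.mk (braidRels (n-1)) 1) = 1 := map_one _
    rw [h1]
    simp
  | of i => exact hgenc i
  | inv_of i ih =>
    have h1 : (PresentedGroup.mk (braidRels (n-1)) (FreeGroup.of i)⁻¹)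
        = (PresentedGroup.mk (braidRels (n-1)) (FreeGroup.of i))⁻¹ := map_inv _ _
    rw [h1]
    exact compat_inv h ρ _ ih
  | mul z w ihz ihw =>
    have h1 : (PresentedGroup.mk (braidRels (n-1)) (z * w))
        = PresentedGroup.mk (braidRels (n-1)) z * PresentedGroup.mk (braidRels (n-1)) w :=
      map_mul _ _ _
    rw [h1]
    exact compat_mul h ρ _ _ ihz ihw

/-- The generator images for the forward homomorphism. -/
def fgen (hn : 2 ≤ n)
    (ρ : BraidGroup (n - 1) →* MulAut (Monoid.CoprodI (fun _ : Fin n => PresentedGroup R)))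
    (v : S ⊕ Fin (n-1)) :
    Monoid.CoprodI (fun _ : Fin n => PresentedGroup R) ⋊[ρ] BraidGroup (n-1) :=
  match v with
  | Sum.inl x => SemidirectProduct.inl
      (Monoid.CoprodI.of (i := (⟨0, by omega⟩ : Fin n)) (PresentedGroup.of x))
  | Sum.inr i => SemidirectProduct.inr (braidGen i)

lemma key_inr_inl (ρ : BraidGroup (n - 1) →* MulAut (Monoid.CoprodI (fun _ : Fin n => PresentedGroup R)))
    (g : BraidGroup (n-1)) (a : Monoid.CoprodI (fun _ : Fin n => PresentedGroup R)) :
    (SemidirectProduct.inr g : _ ⋊[ρ] _) * SemidirectProduct.inl a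
      = SemidirectProduct.inl (ρ g a) * SemidirectProduct.inr g := by
  rw [SemidirectProduct.inl_aut, map_inv]
  group

lemma liftf_mapinl (hn : 2 ≤ n)
    (ρ : BraidGroup (n - 1) →* MulAut (Monoid.CoprodI (fun _ : Fin n => PresentedGroup R)))
    (w : FreeGroup S) :
    FreeGroup.lift (fgen hn ρ) (FreeGroup.map Sum.inl w)
      = SemidirectProduct.inl
          (Monoid.CoprodI.of (M := fun _ : Fin n => PresentedGroup R)
            (i := (⟨0, by omega⟩ : Fin n)) (PresentedGroup.mk R w)) := by
  have key : (FreeGroup.lift (fgen hn ρ)).comp (FreeGroup.map Sum.inl)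
      = SemidirectProduct.inl.comp
          ((Monoid.CoprodI.of (M := fun _ : Fin n => PresentedGroup R)
            (i := (⟨0, by omega⟩ : Fin n))).comp (PresentedGroup.mk R)) := by
    apply FreeGroup.ext_hom; intro a
    simp [fgen, PresentedGroup.of]
  exact DFunLike.congr_fun key w

lemma liftf_mapinr (hn : 2 ≤ n)
    (ρ : BraidGroup (n - 1) →* MulAut (Monoid.CoprodI (fun _ : Fin n => PresentedGroup R)))
    (w : FreeGroup (Fin (n-1))) :
    FreeGroup.lift (fgen hn ρ) (FreeGroup.map Sum.inr w)
      = SemidirectProduct.inr (PresentedGroup.mk (braidRels (n-1)) w) := by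
  have key : (FreeGroup.lift (fgen hn ρ)).comp (FreeGroup.map Sum.inr)
      = SemidirectProduct.inr.comp (PresentedGroup.mk (braidRels (n-1))) := by
    apply FreeGroup.ext_hom; intro a
    simp only [MonoidHom.comp_apply, FreeGroup.map.of, FreeGroup.lift_apply_of]
    rfl
  exact DFunLike.congr_fun key w

end SPP

namespace SPP

variable {n : ℕ} {S : Type} {R : Set (FreeGroup S)} {D : FreeGroup S}

@[simp] lemma fgen_inl (hn : 2 ≤ n)
    (ρ : BraidGroup (n - 1) →* MulAut (Monoid.CoprodI (fun _ : Fin n => PresentedGroup R)))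
    (x : S) :
    fgen hn ρ (Sum.inl x) = SemidirectProduct.inl
      (Monoid.CoprodI.of (M := fun _ : Fin n => PresentedGroup R)
        (i := (⟨0, by omega⟩ : Fin n)) (PresentedGroup.of x)) := rfl

@[simp] lemma fgen_inr (hn : 2 ≤ n)
    (ρ : BraidGroup (n - 1) →* MulAut (Monoid.CoprodI (fun _ : Fin n => PresentedGroup R)))
    (i : Fin (n-1)) :
    fgen hn ρ (Sum.inr i) = SemidirectProduct.inr (braidGen i) := rfl

/-- The forward homomorphism from the presented group to the semidirect product. -/
def Phi (hn : 2 ≤ n) (h : PresentedGroup R) (hD : PresentedGroup.mk R D = h)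
    (ρ : BraidGroup (n - 1) →* MulAut (Monoid.CoprodI (fun _ : Fin n => PresentedGroup R)))
    (hρ : IsArtinRep h ρ) :
    PresentedGroup (semidirectRels n S R D) →*
      (Monoid.CoprodI (fun _ : Fin n => PresentedGroup R) ⋊[ρ] BraidGroup (n-1)) :=
  PresentedGroup.toGroup (f := fgen hn ρ) (by
    intro r hr
    rcases hr with (((⟨r₀, h₀, rfl⟩ | ⟨r₀, h₀, rfl⟩) | ⟨x, i, hi, rfl⟩) | ⟨x, i, hi, rfl⟩)
    · rw [liftf_mapinl hn ρ r₀, mk_R_eq_one h₀, map_one, map_one]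
    · rw [liftf_mapinr hn ρ r₀, mk_braid_eq_one h₀, map_one]
    · -- commutation relators
      simp only [map_mul, map_inv, FreeGroup.lift_apply_of]
      rw [mul_inv_eq_one]
      rw [fgen_inl, fgen_inr, key_inr_inl]
      have hfix : ρ (braidGen i) (Monoid.CoprodI.of (i := (⟨0, by omega⟩ : Fin n))
          (PresentedGroup.of x)) = Monoid.CoprodI.of (i := (⟨0, by omega⟩ : Fin n))
          (PresentedGroup.of x) := by
        apply (hρ i).2.2
        · intro hc
          exact absurd (show (0 : ℕ) = (i : ℕ) from congrArg Fin.val hc) (by omega)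
        · intro hc
          exact absurd (show (0 : ℕ) = (i : ℕ) + 1 from congrArg Fin.val hc) (by omega)
      rw [hfix]
    · -- the Artin relator
      simp only [map_mul, map_inv, FreeGroup.lift_apply_of, liftf_mapinl hn ρ D, hD]
      rw [mul_inv_eq_one]
      have hj0 : (⟨0, by omega⟩ : Fin n) = idx0 i := Fin.ext (by exact hi.symm)
      simp only [fgen_inl, fgen_inr]
      rw [hj0]
      set σ := braidGen i with hσ
      set A := Monoid.CoprodI.of (M := fun _ : Fin n => PresentedGroup R) (i := idx0 i) h
        with hA
      set X := Monoid.CoprodI.of (M := fun _ : Fin n => PresentedGroup R) (i := idx0 i)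
        (PresentedGroup.of x) with hX
      have e1 := (hρ i).1
      have e2 := (hρ i).2.1
      ext
      · simp only [SemidirectProduct.mul_left, SemidirectProduct.mul_right,
          SemidirectProduct.inv_left, SemidirectProduct.inv_right,
          SemidirectProduct.left_inl, SemidirectProduct.right_inl,
          SemidirectProduct.left_inr, SemidirectProduct.right_inr,
          map_one, map_mul, map_inv, one_mul, mul_one, inv_one,
          MulAut.one_apply, MulAut.mul_apply, hσ, hA, hX, e1, e2]
        group
      · simp [SemidirectProduct.mul_right]
      )

@[simp] lemma Phi_of_inl (hn : 2 ≤ n) (h : PresentedGroup R)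
    (hD : PresentedGroup.mk R D = h)
    (ρ : BraidGroup (n - 1) →* MulAut (Monoid.CoprodI (fun _ : Fin n => PresentedGroup R)))
    (hρ : IsArtinRep h ρ) (x : S) :
    Phi hn h hD ρ hρ (PresentedGroup.of (Sum.inl x))
      = SemidirectProduct.inl (Monoid.CoprodI.of (M := fun _ : Fin n => PresentedGroup R)
          (i := (⟨0, by omega⟩ : Fin n)) (PresentedGroup.of x)) := by
  rw [Phi, PresentedGroup.toGroup.of, fgen_inl]

@[simp] lemma Phi_of_inr (hn : 2 ≤ n) (h : PresentedGroup R)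
    (hD : PresentedGroup.mk R D = h)
    (ρ : BraidGroup (n - 1) →* MulAut (Monoid.CoprodI (fun _ : Fin n => PresentedGroup R)))
    (hρ : IsArtinRep h ρ) (i : Fin (n-1)) :
    Phi hn h hD ρ hρ (PresentedGroup.of (Sum.inr i))
      = SemidirectProduct.inr (braidGen i) := by
  rw [Phi, PresentedGroup.toGroup.of, fgen_inr]

end SPP

namespace SPP

variable {n : ℕ} {S : Type} {R : Set (FreeGroup S)} {D : FreeGroup S}

lemma PhiE (hn : 2 ≤ n) (h : PresentedGroup R) (hD : PresentedGroup.mk R D = h)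
    (ρ : BraidGroup (n - 1) →* MulAut (Monoid.CoprodI (fun _ : Fin n => PresentedGroup R)))
    (hρ : IsArtinRep h ρ) (m : ℕ) :
    ∀ (hm : m < n) (y : PresentedGroup R),
      Phi hn h hD ρ hρ (ee n S R D h m y)
        = SemidirectProduct.inl (Monoid.CoprodI.of (i := (⟨m, hm⟩ : Fin n)) y) := by
  induction m with
  | zero =>
    intro hm y
    have key : (Phi hn h hD ρ hρ).comp (ee n S R D h 0)
        = SemidirectProduct.inl.comp
            (Monoid.CoprodI.of (M := fun _ : Fin n => PresentedGroup R)
              (i := (⟨0, hm⟩ : Fin n))) := by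
      apply PresentedGroup.ext
      intro x
      simp only [MonoidHom.comp_apply, ee_zero, e0_of, Phi_of_inl]
    exact DFunLike.congr_fun key y
  | succ m IH =>
    intro hm y
    have hm' : m < n - 1 := by omega
    have hmn : m < n := by omega
    rw [ee_succ]
    simp only [map_mul, map_inv]
    rw [IH hmn h, IH hmn y, sN_eq m hm', Phi_of_inr]
    set σ := braidGen (⟨m, hm'⟩ : Fin (n-1)) with hσ
    set A := Monoid.CoprodI.of (M := fun _ : Fin n => PresentedGroup R)
      (i := (⟨m, hmn⟩ : Fin n)) h with hA
    set Y := Monoid.CoprodI.of (M := fun _ : Fin n => PresentedGroup R)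
      (i := (⟨m, hmn⟩ : Fin n)) y with hY
    have e1' : ρ σ Y = A⁻¹ * (Monoid.CoprodI.of (M := fun _ : Fin n => PresentedGroup R)
        (i := (⟨m+1, hm⟩ : Fin n)) y) * A := (hρ ⟨m, hm'⟩).1 y
    calc SemidirectProduct.inl A * SemidirectProduct.inr σ * SemidirectProduct.inl Y *
          (SemidirectProduct.inl A * SemidirectProduct.inr σ)⁻¹
        = SemidirectProduct.inl A * (SemidirectProduct.inr σ * SemidirectProduct.inl Y) *
            ((SemidirectProduct.inr σ)⁻¹ * (SemidirectProduct.inl A)⁻¹) := by group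
      _ = SemidirectProduct.inl A * (SemidirectProduct.inl (ρ σ Y) *
            SemidirectProduct.inr σ) * ((SemidirectProduct.inr σ)⁻¹ *
            (SemidirectProduct.inl A)⁻¹) := by rw [key_inr_inl]
      _ = SemidirectProduct.inl A * SemidirectProduct.inl (ρ σ Y) *
            (SemidirectProduct.inl A)⁻¹ := by group
      _ = SemidirectProduct.inl (A * ρ σ Y * A⁻¹) := by
            simp only [← map_inv, ← map_mul]
      _ = SemidirectProduct.inl (Monoid.CoprodI.of (M := fun _ : Fin n => PresentedGroup R)
            (i := (⟨m+1, hm⟩ : Fin n)) y) := by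
            rw [e1']
            congr 1
            group

end SPP

theorem semidirect_product_presentation (n : ℕ) (hn : 2 ≤ n)
    (S : Type) (R : Set (FreeGroup S))
    (h : PresentedGroup R) (hh : h ≠ 1)
    (D : FreeGroup S) (hD : PresentedGroup.mk R D = h)
    (ρ : BraidGroup (n - 1) →* MulAut (Monoid.CoprodI (fun _ : Fin n => PresentedGroup R)))
    (hρ : IsArtinRep h ρ) :
    Nonempty ((Monoid.CoprodI (fun _ : Fin n => PresentedGroup R) ⋊[ρ] BraidGroup (n - 1)) ≃*
      PresentedGroup (semidirectRels n S R D)) := by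
  have hcc : ∀ β : BraidGroup (n-1),
      (SPP.gG n S R D h).comp (ρ β).toMonoidHom
        = (MulAut.conj (SPP.bB n S R D β)).toMonoidHom.comp (SPP.gG n S R D h) := by
    intro β
    refine MonoidHom.ext fun x => ?_
    simp only [MonoidHom.comp_apply, MulEquiv.coe_toMonoidHom, MulAut.conj_apply]
    exact SPP.compat h hD ρ hρ β x
  set Ψ := SemidirectProduct.lift (SPP.gG n S R D h) (SPP.bB n S R D) hcc with hΨ
  set Φ := SPP.Phi hn h hD ρ hρ with hΦ
  refine ⟨MonoidHom.toMulEquiv Ψ Φ ?_ ?_⟩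
  · -- Φ ∘ Ψ = id
    apply SemidirectProduct.hom_ext
    · apply Monoid.CoprodI.ext_hom
      intro j
      refine MonoidHom.ext fun y => ?_
      simp only [MonoidHom.comp_apply, MonoidHom.id_apply]
      rw [hΨ, SemidirectProduct.lift_inl, SPP.gG_of, hΦ,
        SPP.PhiE hn h hD ρ hρ j.1 j.2 y, Fin.eta]
    · refine PresentedGroup.ext fun i => ?_
      show Φ (Ψ (SemidirectProduct.inr (braidGen i))) = SemidirectProduct.inr (braidGen i)
      rw [hΨ, SemidirectProduct.lift_inr, SPP.bB_of, hΦ, SPP.Phi_of_inr]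
  · -- Ψ ∘ Φ = id
    refine PresentedGroup.ext fun v => ?_
    simp only [MonoidHom.comp_apply, MonoidHom.id_apply]
    cases v with
    | inl x =>
      rw [hΦ, SPP.Phi_of_inl, hΨ, SemidirectProduct.lift_inl, SPP.gG_of]
      show SPP.ee n S R D h 0 (PresentedGroup.of x) = _
      rw [SPP.ee_zero, SPP.e0_of]
    | inr i =>
      rw [hΦ, SPP.Phi_of_inr, hΨ, SemidirectProduct.lift_inr, SPP.bB_of]
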